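/- Under the hypotheses that $X_0 \sim \pi^{(j)}$ and $\pi_y \mathbb{P}(X_t = j) \le \pi_j \mathbb{P}(X_t = y)$ for all $t \ge 0, y \in S$, let $T^{(j)}$ be a strong stationary time with $\mathbb{P}(T^{(j)} > t) = (P^t(j,j) - \pi_j)/(1-\pi_j)$. Then $\mathbb{P}(T^{(j)} > t, X_t = j) = 0$ for all $t \ge 0$. -/

import Mathlib

open MeasureTheory Finset

/-- A (homogeneous) Markov chain with one-step transition matrix `P`, stated by
conditioning on the full history. -/
def IsMarkovChain {Ω E : Type*} [MeasurableSpace Ω] (μ : Measure Ω)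
    (X : ℕ → Ω → E) (P : E → E → ℝ) : Prop :=
  ∀ (t : ℕ) (h : ℕ → E) (y : E),
    (μ {ω | X (t + 1) ω = y ∧ ∀ i ≤ t, X i ω = h i}).toReal
      = P (h t) y * (μ {ω | ∀ i ≤ t, X i ω = h i}).toReal

/-- A strong stationary time `T` for the chain `X` with stationary distribution `π`:
at and after time `T` the chain is stationary and independent of `T`. -/
def IsStrongStationaryTime {Ω E : Type*} [MeasurableSpace Ω] (μ : Measure Ω)
    (X : ℕ → Ω → E) (T : Ω → ℕ) (π : E → ℝ) : Prop :=
  ∀ (s t : ℕ), s ≤ t → ∀ y : E,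
    (μ {ω | T ω = s ∧ X t ω = y}).toReal = (μ {ω | T ω = s}).toReal * π y

open scoped ENNReal


section Helpers
variable {Ω : Type*} [MeasurableSpace Ω] {μ : Measure Ω} [IsProbabilityMeasure μ]

lemma toReal_mono' {A B : Set Ω} (h : A ⊆ B) : (μ A).toReal ≤ (μ B).toReal :=
  ENNReal.toReal_mono (measure_ne_top μ B) (measure_mono h)

lemma toReal_union_le (A B : Set Ω) :
    (μ (A ∪ B)).toReal ≤ (μ A).toReal + (μ B).toReal := by
  have h := measure_union_le (μ := μ) A B
  have h2 := ENNReal.toReal_mono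
    (ENNReal.add_ne_top.mpr ⟨measure_ne_top μ A, measure_ne_top μ B⟩) h
  rwa [ENNReal.toReal_add (measure_ne_top μ A) (measure_ne_top μ B)] at h2

lemma toReal_biUnion_le {ι : Type*} (s : Finset ι) (B : ι → Set Ω) :
    (μ (⋃ i ∈ s, B i)).toReal ≤ ∑ i ∈ s, (μ (B i)).toReal := by
  classical
  induction s using Finset.induction_on with
  | empty => simp
  | @insert a s ha ih =>
    rw [Finset.sum_insert ha, Finset.set_biUnion_insert]
    exact le_trans (toReal_union_le _ _) (by linarith)

lemma one_le_add_compl (A : Set Ω) : 1 ≤ (μ A).toReal + (μ Aᶜ).toReal := by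
  have h : (μ Set.univ).toReal ≤ (μ A).toReal + (μ Aᶜ).toReal := by
    rw [← Set.union_compl_self A]; exact toReal_union_le A Aᶜ
  simpa using h

lemma split_of_add_compl {B : Set Ω} (hB : (μ B).toReal + (μ Bᶜ).toReal = 1) (C : Set Ω) :
    (μ (C ∩ B)).toReal + (μ (C \ B)).toReal = (μ C).toReal := by
  have hμ : μ B + μ Bᶜ = 1 := by
    have h1 : (μ B + μ Bᶜ).toReal = 1 := by
      rw [ENNReal.toReal_add (measure_ne_top μ B) (measure_ne_top μ Bᶜ)]; exact hB
    exact (ENNReal.toReal_eq_one_iff _).mp h1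
  set H := toMeasurable μ B with hH
  set H' := toMeasurable μ Bᶜ with hH'
  have hHm : MeasurableSet H := measurableSet_toMeasurable μ B
  have hH'm : MeasurableSet H' := measurableSet_toMeasurable μ Bᶜ
  have hBH : B ⊆ H := subset_toMeasurable μ B
  have hBH' : Bᶜ ⊆ H' := subset_toMeasurable μ Bᶜ
  have hμH : μ H = μ B := measure_toMeasurable B
  have hμH' : μ H' = μ Bᶜ := measure_toMeasurable Bᶜ
  have hcupsub : Set.univ ⊆ H ∪ H' := by
    intro x _
    by_cases hx : x ∈ B
    · exact Or.inl (hBH hx)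
    · exact Or.inr (hBH' hx)
  have hcup : μ (H ∪ H') = 1 := le_antisymm
    ((measure_mono (Set.subset_univ _)).trans_eq measure_univ)
    (by simpa using measure_mono (μ := μ) hcupsub)
  have hinter : μ (H ∩ H') = 0 := by
    have h2 : μ (H ∪ H') + μ (H ∩ H') = μ H + μ H' := measure_union_add_inter H hH'm
    rw [hcup, hμH, hμH', hμ] at h2
    have h3 : (1 : ℝ≥0∞) + μ (H ∩ H') = 1 + 0 := by simpa using h2
    exact (ENNReal.add_right_inj (by norm_num)).mp h3
  have e1 : μ (C ∩ B) = μ (C ∩ H) := by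
    refine le_antisymm (measure_mono (Set.inter_subset_inter_right _ hBH)) ?_
    have hsub : C ∩ H ⊆ (C ∩ B) ∪ (H ∩ H') := by
      rintro x ⟨hxC, hxH⟩
      by_cases hB' : x ∈ B
      · exact Or.inl ⟨hxC, hB'⟩
      · exact Or.inr ⟨hxH, hBH' hB'⟩
    calc μ (C ∩ H) ≤ μ ((C ∩ B) ∪ (H ∩ H')) := measure_mono hsub
      _ ≤ μ (C ∩ B) + μ (H ∩ H') := measure_union_le _ _
      _ = μ (C ∩ B) := by rw [hinter, add_zero]
  have e2 : μ (C \ B) = μ (C \ H) := by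
    refine le_antisymm ?_ (measure_mono (Set.diff_subset_diff_right hBH))
    have hsub : C \ B ⊆ (C \ H) ∪ (H ∩ H') := by
      rintro x ⟨hxC, hxB⟩
      by_cases hH'' : x ∈ H
      · exact Or.inr ⟨hH'', hBH' hxB⟩
      · exact Or.inl ⟨hxC, hH''⟩
    calc μ (C \ B) ≤ μ ((C \ H) ∪ (H ∩ H')) := measure_mono hsub
      _ ≤ μ (C \ H) + μ (H ∩ H') := measure_union_le _ _
      _ = μ (C \ H) := by rw [hinter, add_zero]
  have e3 := measure_inter_add_diff (μ := μ) C hHm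
  rw [e1, e2]
  have h4 : (μ (C ∩ H) + μ (C \ H)).toReal = (μ C).toReal := by rw [e3]
  rwa [ENNReal.toReal_add (measure_ne_top _ _) (measure_ne_top _ _)] at h4

end Helpers
section Tight
variable {Ω : Type*} [MeasurableSpace Ω] {μ : Measure Ω} [IsProbabilityMeasure μ]

lemma tight_family {ι : Type*} [Fintype ι] [DecidableEq ι] {B : ι → Set Ω}
    (hdisj : ∀ i k, i ≠ k → Disjoint (B i) (B k))
    (hcov : ∀ ω, ∃ i, ω ∈ B i)
    (hsum : ∑ i, (μ (B i)).toReal = 1) :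
    (∀ i C, (μ (C ∩ B i)).toReal + (μ (C \ B i)).toReal = (μ C).toReal) ∧
      (∀ C, (μ C).toReal = ∑ i, (μ (C ∩ B i)).toReal) := by
  have hspl : ∀ i C, (μ (C ∩ B i)).toReal + (μ (C \ B i)).toReal = (μ C).toReal := by
    intro i
    have hsub : (B i)ᶜ ⊆ ⋃ k ∈ Finset.univ.erase i, B k := by
      intro x hx
      obtain ⟨k, hk⟩ := hcov x
      have hki : k ≠ i := by rintro rfl; exact hx hk
      exact Set.mem_biUnion (Finset.mem_erase.mpr ⟨hki, Finset.mem_univ _⟩) hk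
    have hle : (μ (B i)ᶜ).toReal ≤ 1 - (μ (B i)).toReal := by
      have h1 := (toReal_mono' (μ := μ) hsub).trans (toReal_biUnion_le _ _)
      have h2 : (μ (B i)).toReal + ∑ k ∈ Finset.univ.erase i, (μ (B k)).toReal = 1 := by
        rw [Finset.add_sum_erase Finset.univ (fun k => (μ (B k)).toReal) (Finset.mem_univ i)]; exact hsum
      linarith
    have hge := one_le_add_compl (μ := μ) (B i)
    exact split_of_add_compl (by linarith)
  refine ⟨hspl, ?_⟩
  have claim : ∀ s : Finset ι, ∀ C : Set Ω, (∀ ω ∈ C, ∃ i ∈ s, ω ∈ B i) →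
      (μ C).toReal = ∑ i ∈ s, (μ (C ∩ B i)).toReal := by
    intro s
    induction s using Finset.induction_on with
    | empty =>
      intro C hC
      have hCe : C = ∅ := by
        apply Set.eq_empty_iff_forall_notMem.mpr
        intro x hx
        obtain ⟨i, hi, _⟩ := hC x hx
        exact absurd hi (Finset.notMem_empty i)
      simp [hCe]
    | @insert a s ha ih =>
      intro C hC
      have h1 := hspl a C
      have hsub : ∀ ω ∈ C \ B a, ∃ i ∈ s, ω ∈ B i := by
        rintro ω ⟨hω, hna⟩
        obtain ⟨i, hi, hBi⟩ := hC ω hω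
        rcases Finset.mem_insert.mp hi with rfl | his
        · exact absurd hBi hna
        · exact ⟨i, his, hBi⟩
      have h2 := ih (C \ B a) hsub
      have h3 : ∀ i ∈ s, (C \ B a) ∩ B i = C ∩ B i := by
        intro i his
        ext x
        constructor
        · rintro ⟨⟨hxC, _⟩, hxB⟩; exact ⟨hxC, hxB⟩
        · rintro ⟨hxC, hxB⟩
          have hia : i ≠ a := by rintro rfl; exact ha his
          exact ⟨⟨hxC, fun hxa => Set.disjoint_left.mp (hdisj i a hia) hxB hxa⟩, hxB⟩
      rw [Finset.sum_insert ha, ← h1, h2, Finset.sum_congr rfl (fun i hi => by rw [h3 i hi])]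
  intro C
  exact claim Finset.univ C (fun ω _ => by
    obtain ⟨i, hi⟩ := hcov ω; exact ⟨i, Finset.mem_univ i, hi⟩)

end Tight
section Markov
variable {S : Type*} [Fintype S] [DecidableEq S]

def finSnocEquiv (n : ℕ) (S : Type*) : (Fin (n+1) → S) ≃ (Fin n → S) × S where
  toFun g := (Fin.init g, g (Fin.last n))
  invFun p := Fin.snoc p.1 p.2
  left_inv g := Fin.snoc_init_self g
  right_inv p := by
    refine Prod.ext ?_ ?_ <;> simp [Fin.init_snoc, Fin.snoc_last]

variable {Ω : Type*} [MeasurableSpace Ω] {μ : Measure Ω} [IsProbabilityMeasure μ]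

def histEv (X : ℕ → Ω → S) (t : ℕ) (f : Fin (t+1) → S) : Set Ω :=
  {ω | ∀ i : Fin (t+1), X i ω = f i}

lemma histEv_zero (X : ℕ → Ω → S) (f : Fin 1 → S) :
    histEv X 0 f = {ω | X 0 ω = f 0} := by
  ext ω
  simp only [histEv, Set.mem_setOf_eq]
  constructor
  · intro h; exact h 0
  · intro h i
    have : i = 0 := by apply Fin.ext; omega
    rw [this]; exact h

lemma histEv_succ (X : ℕ → Ω → S) (P : S → S → ℝ)
    (hchain : IsMarkovChain μ X P) (t : ℕ) (g : Fin (t+2) → S) :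
    (μ (histEv X (t+1) g)).toReal
      = P (Fin.init g (Fin.last t)) (g (Fin.last (t+1)))
          * (μ (histEv X t (Fin.init g))).toReal := by
  have h := hchain t (fun n => g ⟨min n (t+1), by omega⟩) (g (Fin.last (t+1)))
  have e1 : {ω | X (t+1) ω = g (Fin.last (t+1)) ∧
      ∀ i ≤ t, X i ω = g ⟨min i (t+1), by omega⟩} = histEv X (t+1) g := by
    ext ω
    simp only [Set.mem_setOf_eq, histEv]
    constructor
    · rintro ⟨h1, h2⟩ i
      by_cases hi : (i : ℕ) ≤ t
      · have h3 := h2 i hi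
        have h4 : (⟨min (i : ℕ) (t+1), by omega⟩ : Fin (t+2)) = i := by
          apply Fin.ext; simp <;> omega
        rw [h4] at h3
        exact h3
      · have h5 : i = Fin.last (t+1) := by
          apply Fin.ext; simp [Fin.val_last]; omega
        rw [h5]
        simpa using h1
    · intro hall
      refine ⟨by simpa using hall (Fin.last (t+1)), ?_⟩
      intro i hi
      have h4 : (⟨min i (t+1), by omega⟩ : Fin (t+2)) = ⟨i, by omega⟩ := by
        apply Fin.ext; simp <;> omega
      rw [h4]
      exact hall ⟨i, by omega⟩
  have e2 : {ω | ∀ i ≤ t, X i ω = (fun n => g ⟨min n (t+1), by omega⟩) i}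
      = histEv X t (Fin.init g) := by
    ext ω
    simp only [Set.mem_setOf_eq, histEv]
    constructor
    · intro h2 i
      have h3 := h2 i (by omega : (i : ℕ) ≤ t)
      have h4 : (⟨min (i : ℕ) (t+1), by omega⟩ : Fin (t+2)) = i.castSucc := by
        apply Fin.ext; simp <;> omega
      rw [h4] at h3
      exact h3
    · intro hall i hi
      have h3 := hall ⟨i, by omega⟩
      have h4 : (⟨min i (t+1), by omega⟩ : Fin (t+2)) = (⟨i, by omega⟩ : Fin (t+1)).castSucc := by
        apply Fin.ext; simp <;> omega
      rw [h4]
      simpa [Fin.init] using h3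
  have e3 : g ⟨min t (t+1), by omega⟩ = Fin.init g (Fin.last t) := by
    have h4 : (⟨min t (t+1), by omega⟩ : Fin (t+2)) = (Fin.last t).castSucc := by
      apply Fin.ext; simp
    rw [h4]; rfl
  rw [e1, e2, e3] at h
  exact h

end Markov
set_option maxHeartbeats 1000000 in
lemma markov_facts {S : Type*} [Fintype S] [DecidableEq S]
    {Ω : Type*} [MeasurableSpace Ω] {μ : Measure Ω} [IsProbabilityMeasure μ]
    (X : ℕ → Ω → S) (P : S → S → ℝ)
    (hP1 : ∀ x, ∑ y, P x y = 1)
    (hchain : IsMarkovChain μ X P)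
    (hinit1 : ∑ s, (μ {ω | X 0 ω = s}).toReal = 1) :
    ∀ t : ℕ,
      (∀ y C, (μ (C ∩ {ω | X t ω = y})).toReal + (μ (C \ {ω | X t ω = y})).toReal
          = (μ C).toReal) ∧
      (∀ y, (μ {ω | X (t+1) ω = y}).toReal
          = ∑ x, (μ {ω | X t ω = x}).toReal * P x y) := by
  classical
  -- tightness of history partitions
  have hTight : ∀ t : ℕ, ∑ f : Fin (t+1) → S, (μ (histEv X t f)).toReal = 1 := by
    intro t
    induction t with
    | zero =>
      calc ∑ f : Fin 1 → S, (μ (histEv X 0 f)).toReal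
          = ∑ s : S, (μ {ω | X 0 ω = s}).toReal := by
            apply Fintype.sum_equiv (Equiv.funUnique (Fin 1) S)
            intro f
            rw [histEv_zero]
            rfl
        _ = 1 := hinit1
    | succ t ih =>
      calc ∑ g : Fin (t+2) → S, (μ (histEv X (t+1) g)).toReal
          = ∑ p : (Fin (t+1) → S) × S,
              P (p.1 (Fin.last t)) p.2 * (μ (histEv X t p.1)).toReal := by
            apply Fintype.sum_equiv (finSnocEquiv (t+1) S)
            intro g
            exact histEv_succ X P hchain t g
        _ = ∑ f : Fin (t+1) → S, ∑ y : S,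
              P (f (Fin.last t)) y * (μ (histEv X t f)).toReal := Fintype.sum_prod_type _
        _ = ∑ f : Fin (t+1) → S, (μ (histEv X t f)).toReal := by
            apply Finset.sum_congr rfl
            intro f _
            rw [← Finset.sum_mul, hP1, one_mul]
        _ = 1 := ih
  have hdisjEv : ∀ t (f g : Fin (t+1) → S), f ≠ g → Disjoint (histEv X t f) (histEv X t g) := by
    intro t f g hfg
    obtain ⟨i, hi⟩ := Function.ne_iff.mp hfg
    rw [Set.disjoint_left]
    intro ω hf hg
    exact hi ((hf i).symm.trans (hg i))
  have hcovEv : ∀ t (ω : Ω), ∃ f : Fin (t+1) → S, ω ∈ histEv X t f := by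
    intro t ω
    exact ⟨fun i => X i ω, fun i => rfl⟩
  have hTf : ∀ t : ℕ,
      (∀ (f : Fin (t+1) → S) C, (μ (C ∩ histEv X t f)).toReal
          + (μ (C \ histEv X t f)).toReal = (μ C).toReal) ∧
      (∀ C, (μ C).toReal = ∑ f : Fin (t+1) → S, (μ (C ∩ histEv X t f)).toReal) :=
    fun t => tight_family (hdisjEv t) (fun ω => hcovEv t ω) (hTight t)
  -- fibers
  have hcell : ∀ t (y : S) (f : Fin (t+1) → S),
      {ω | X t ω = y} ∩ histEv X t f
        = if f (Fin.last t) = y then histEv X t f else ∅ := by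
    intro t y f
    by_cases hf : f (Fin.last t) = y
    · rw [if_pos hf]
      apply Set.inter_eq_self_of_subset_right
      intro ω hω
      have h1 := hω (Fin.last t)
      simp only [Fin.val_last] at h1
      rw [Set.mem_setOf_eq, h1, hf]
    · rw [if_neg hf]
      apply Set.eq_empty_iff_forall_notMem.mpr
      rintro ω ⟨hy, hω⟩
      have h1 := hω (Fin.last t)
      simp only [Fin.val_last] at h1
      rw [Set.mem_setOf_eq] at hy
      exact hf (h1.symm.trans hy)
  have hq : ∀ t (y : S), (μ {ω | X t ω = y}).toReal
      = ∑ f : Fin (t+1) → S, (if f (Fin.last t) = y then (μ (histEv X t f)).toReal else 0) := by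
    intro t y
    rw [(hTf t).2 {ω | X t ω = y}]
    apply Finset.sum_congr rfl
    intro f _
    rw [hcell t y f]
    by_cases hf : f (Fin.last t) = y
    · rw [if_pos hf, if_pos hf]
    · rw [if_neg hf, if_neg hf]
      simp
  -- marginal tightness
  have hXsum : ∀ t : ℕ, ∑ y : S, (μ {ω | X t ω = y}).toReal = 1 := by
    intro t
    calc ∑ y : S, (μ {ω | X t ω = y}).toReal
        = ∑ y : S, ∑ f : Fin (t+1) → S,
            (if f (Fin.last t) = y then (μ (histEv X t f)).toReal else 0) := by
          exact Finset.sum_congr rfl (fun y _ => hq t y)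
      _ = ∑ f : Fin (t+1) → S, ∑ y : S,
            (if f (Fin.last t) = y then (μ (histEv X t f)).toReal else 0) := Finset.sum_comm
      _ = ∑ f : Fin (t+1) → S, (μ (histEv X t f)).toReal := by
          apply Finset.sum_congr rfl
          intro f _
          rw [Finset.sum_ite_eq Finset.univ (f (Fin.last t))
            (fun _ => (μ (histEv X t f)).toReal)]
          simp
      _ = 1 := hTight t
  intro t
  constructor
  · intro y C
    exact (tight_family (fun a b hab => by
        rw [Set.disjoint_left]; intro ω h1 h2
        rw [Set.mem_setOf_eq] at h1 h2
        exact hab (h1.symm.trans h2))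
      (fun ω => ⟨X t ω, rfl⟩) (hXsum t)).1 y C
  · intro y
    calc (μ {ω | X (t+1) ω = y}).toReal
        = ∑ g : Fin (t+2) → S,
            (if g (Fin.last (t+1)) = y then (μ (histEv X (t+1) g)).toReal else 0) := hq (t+1) y
      _ = ∑ g : Fin (t+2) → S, (if g (Fin.last (t+1)) = y
            then P (Fin.init g (Fin.last t)) (g (Fin.last (t+1)))
              * (μ (histEv X t (Fin.init g))).toReal else 0) := by
          apply Finset.sum_congr rfl
          intro g _
          by_cases hg : g (Fin.last (t+1)) = y
          · rw [if_pos hg, if_pos hg, histEv_succ X P hchain t g]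
          · rw [if_neg hg, if_neg hg]
      _ = ∑ p : (Fin (t+1) → S) × S, (if p.2 = y
            then P (p.1 (Fin.last t)) p.2 * (μ (histEv X t p.1)).toReal else 0) := by
          apply Fintype.sum_equiv (finSnocEquiv (t+1) S)
          intro g
          rfl
      _ = ∑ f : Fin (t+1) → S, ∑ z : S, (if z = y
            then P (f (Fin.last t)) z * (μ (histEv X t f)).toReal else 0) :=
          Fintype.sum_prod_type _
      _ = ∑ f : Fin (t+1) → S, P (f (Fin.last t)) y * (μ (histEv X t f)).toReal := by
          apply Finset.sum_congr rfl
          intro f _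
          rw [Finset.sum_ite_eq' Finset.univ y
            (fun z => P (f (Fin.last t)) z * (μ (histEv X t f)).toReal)]
          simp
      _ = ∑ f : Fin (t+1) → S, ∑ x : S,
            (if f (Fin.last t) = x then P x y * (μ (histEv X t f)).toReal else 0) := by
          apply Finset.sum_congr rfl
          intro f _
          rw [Finset.sum_ite_eq Finset.univ (f (Fin.last t))
            (fun x => P x y * (μ (histEv X t f)).toReal)]
          simp
      _ = ∑ x : S, ∑ f : Fin (t+1) → S,
            (if f (Fin.last t) = x then P x y * (μ (histEv X t f)).toReal else 0) :=
          Finset.sum_comm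
      _ = ∑ x : S, (μ {ω | X t ω = x}).toReal * P x y := by
          apply Finset.sum_congr rfl
          intro x _
          rw [hq t x, Finset.sum_mul]
          apply Finset.sum_congr rfl
          intro f _
          by_cases hf : f (Fin.last t) = x
          · rw [if_pos hf, if_pos hf, mul_comm]
          · rw [if_neg hf, if_neg hf, zero_mul]

set_option maxHeartbeats 1000000 in
/-- if `X₀ ~ π^{(j)}`, `π_y ℙ(X_t = j) ≤ π_j ℙ(X_t = y)` for all `t, y`, and
`T` is a strong stationary time with `ℙ(T > t) = (P^t(j,j) - π_j)/(1 - π_j)`, then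
`ℙ(T > t, X_t = j) = 0` for all `t`. -/
theorem sst_before_hit {S : Type*} [Fintype S] [DecidableEq S] [Nonempty S]
    {Ω : Type*} [MeasurableSpace Ω] (μ : Measure Ω) [IsProbabilityMeasure μ]
    (X : ℕ → Ω → S) (T : Ω → ℕ)
    (P : Matrix S S ℝ) (π : S → ℝ) (j : S)
    (hP0 : ∀ i k, 0 ≤ P i k) (hP1 : ∀ i, ∑ k, P i k = 1)
    (hirr : ∀ i k, ∃ t, 0 < (P ^ t) i k)
    (herg : ∃ t, ∀ i k, 0 < (P ^ t) i k)
    (hπpos : ∀ s, 0 < π s) (hπsum : ∑ s, π s = 1)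
    (hstat : Matrix.vecMul π P = π) (hπj : π j < 1)
    (hchain : IsMarkovChain μ (fun t => X t) (fun a b => P a b))
    (hinit : ∀ s, (μ {ω | X 0 ω = s}).toReal
      = (π s - if s = j then π j else 0) / (1 - π j))
    (hineq : ∀ (t : ℕ) (y : S),
      π y * (μ {ω | X t ω = j}).toReal ≤ π j * (μ {ω | X t ω = y}).toReal)
    (hsst : IsStrongStationaryTime μ X T π)
    (hTail : ∀ t : ℕ, (μ {ω | t < T ω}).toReal = ((P ^ t) j j - π j) / (1 - π j)) :
    ∀ t : ℕ, μ {ω | t < T ω ∧ X t ω = j} = 0 := by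
  classical
  have hπj1 : (0:ℝ) < 1 - π j := by linarith
  have hπjpos := hπpos j
  set τ : ℕ → ℝ := fun t => ((P ^ t) j j - π j) / (1 - π j) with hτdef
  have hinit1 : ∑ s, (μ {ω | X 0 ω = s}).toReal = 1 := by
    rw [Finset.sum_congr rfl (fun s _ => hinit s), ← Finset.sum_div,
      Finset.sum_sub_distrib, hπsum,
      Finset.sum_ite_eq' Finset.univ j (fun _ => π j)]
    simp only [Finset.mem_univ, if_true]
    field_simp
  have MF := markov_facts X (fun a b => P a b) hP1 hchain hinit1
  -- marginal values
  have hq : ∀ t (y : S), (μ {ω | X t ω = y}).toReal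
      = (π y - π j * (P ^ t) j y) / (1 - π j) := by
    intro t
    induction t with
    | zero =>
      intro y
      rw [hinit y, pow_zero]
      congr 1
      by_cases hyj : y = j
      · subst hyj; simp [Matrix.one_apply]
      · simp [Matrix.one_apply, hyj, Ne.symm hyj]
    | succ t ih =>
      intro y
      rw [(MF t).2 y]
      have step1 : ∀ x : S, (μ {ω | X t ω = x}).toReal * P x y
          = (π x * P x y - π j * ((P ^ t) j x * P x y)) / (1 - π j) := by
        intro x
        rw [ih x]
        field_simp
      rw [Finset.sum_congr rfl (fun x _ => step1 x), ← Finset.sum_div,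
        Finset.sum_sub_distrib, ← Finset.mul_sum]
      have hvm : ∑ x, π x * P x y = π y := by
        have := congrFun hstat y
        simpa [Matrix.vecMul, dotProduct] using this
      have hpow : ∑ x, (P ^ t) j x * P x y = (P ^ (t+1)) j y := by
        rw [pow_succ, Matrix.mul_apply]
      rw [hvm, hpow]
  have hqj : ∀ u : ℕ, (μ {ω | X u ω = j}).toReal = π j * (1 - τ u) := by
    intro u
    rw [hq u j, hτdef]
    field_simp
    ring
  have hτ0 : τ 0 = 1 := by
    rw [hτdef]
    simp [Matrix.one_apply]
    field_simp
    exact hπj1.ne'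
  -- the main induction
  have Φ : ∀ t : ℕ,
      (∀ C : Set Ω, (μ (C ∩ {ω | t < T ω})).toReal + (μ (C \ {ω | t < T ω})).toReal
        = (μ C).toReal)
      ∧ (∀ u, t ≤ u →
          (μ ({ω | t < T ω} ∩ {ω | X u ω = j})).toReal = π j * (τ t - τ u)) := by
    intro t
    induction t with
    | zero =>
      have hT0 : (μ {ω | T ω = 0}).toReal = 0 := by
        have h := hsst 0 0 le_rfl j
        have hle : (μ {ω | T ω = 0 ∧ X 0 ω = j}).toReal ≤ (μ {ω | X 0 ω = j}).toReal :=
          toReal_mono' (μ := μ) (fun ω hω => hω.2)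
        rw [h, hqj 0, hτ0] at hle
        have hnn := ENNReal.toReal_nonneg (a := μ {ω | T ω = 0})
        nlinarith
      have hcompl : {ω | 0 < T ω}ᶜ = {ω | T ω = 0} := by
        ext ω; simp [Nat.pos_iff_ne_zero]
      have hsum0 : (μ {ω | 0 < T ω}).toReal + (μ {ω | 0 < T ω}ᶜ).toReal = 1 := by
        rw [hcompl, hT0, hTail 0]
        have : ((P ^ 0) j j - π j) / (1 - π j) = 1 := by
          simp [Matrix.one_apply]; field_simp; exact hπj1.ne'
        rw [this]; ring
      refine ⟨split_of_add_compl hsum0, ?_⟩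
      intro u _
      have hub : (μ ({ω | 0 < T ω} ∩ {ω | X u ω = j})).toReal ≤ (μ {ω | X u ω = j}).toReal :=
        toReal_mono' (μ := μ) Set.inter_subset_right
      have hsub : {ω | X u ω = j} ⊆ ({ω | 0 < T ω} ∩ {ω | X u ω = j}) ∪ {ω | T ω = 0} := by
        intro ω hω
        by_cases hT : T ω = 0
        · exact Or.inr hT
        · exact Or.inl ⟨Nat.pos_of_ne_zero hT, hω⟩
      have hlb := (toReal_mono' (μ := μ) hsub).trans (toReal_union_le _ _)
      rw [hT0, hqj u] at hlb
      rw [hqj u] at hub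
      rw [hτ0]
      linarith
    | succ t ih =>
      obtain ⟨ihSp, ihW⟩ := ih
      have hcomplT : {ω | t < T ω}ᶜ = {ω | T ω ≤ t} := by
        ext ω; simp [Nat.not_lt]
      have hTle : (μ {ω | T ω ≤ t}).toReal = 1 - τ t := by
        have h := ihSp Set.univ
        rw [Set.univ_inter, ← Set.compl_eq_univ_diff, hcomplT, hTail t, measure_univ] at h
        simp only [ENNReal.toReal_one] at h
        rw [hτdef]
        linarith
      have hcub : (μ {ω | T ω = t+1}).toReal ≤ τ t - τ (t+1) := by
        have h := hsst (t+1) (t+1) le_rfl j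
        have hsub : {ω | T ω = t+1 ∧ X (t+1) ω = j}
            ⊆ {ω | t < T ω} ∩ {ω | X (t+1) ω = j} := by
          rintro ω ⟨h1, h2⟩
          refine ⟨?_, h2⟩
          show t < T ω
          omega
        have hm := toReal_mono' (μ := μ) hsub
        rw [h, ihW (t+1) (Nat.le_succ t)] at hm
        nlinarith
      have hclb : τ t - τ (t+1) ≤ (μ {ω | T ω = t+1}).toReal := by
        have hsub : {ω | t < T ω} ⊆ {ω | T ω = t+1} ∪ {ω | t+1 < T ω} := by
          intro ω hω
          simp only [Set.mem_setOf_eq] at hω ⊢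
          rw [Set.mem_union]
          simp only [Set.mem_setOf_eq]
          omega
        have hm := (toReal_mono' (μ := μ) hsub).trans (toReal_union_le _ _)
        rw [hTail t, hTail (t+1)] at hm
        rw [hτdef]
        linarith
      have hceq : (μ {ω | T ω = t+1}).toReal = τ t - τ (t+1) := le_antisymm hcub hclb
      have hcomplT1 : {ω | t+1 < T ω}ᶜ = {ω | T ω ≤ t+1} := by
        ext ω; simp [Nat.not_lt]
      have hT1ub : (μ {ω | T ω ≤ t+1}).toReal ≤ 1 - τ (t+1) := by
        have hsub : {ω | T ω ≤ t+1} ⊆ {ω | T ω ≤ t} ∪ {ω | T ω = t+1} := by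
          intro ω hω
          simp only [Set.mem_setOf_eq] at hω
          rw [Set.mem_union]
          simp only [Set.mem_setOf_eq]
          omega
        have hm := (toReal_mono' (μ := μ) hsub).trans (toReal_union_le _ _)
        rw [hTle, hceq] at hm
        linarith
      have hsum1 : (μ {ω | t+1 < T ω}).toReal + (μ {ω | t+1 < T ω}ᶜ).toReal = 1 := by
        have hge := one_le_add_compl (μ := μ) {ω | t+1 < T ω}
        rw [hcomplT1] at hge ⊢
        rw [hTail (t+1)] at hge ⊢
        rw [hτdef] at hT1ub
        linarith
      have Sp1 := split_of_add_compl hsum1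
      refine ⟨Sp1, ?_⟩
      intro u hu
      have hW := ihW u (le_trans (Nat.le_succ t) hu)
      have h := Sp1 ({ω | t < T ω} ∩ {ω | X u ω = j})
      have e1 : ({ω | t < T ω} ∩ {ω | X u ω = j}) ∩ {ω | t+1 < T ω}
          = {ω | t+1 < T ω} ∩ {ω | X u ω = j} := by
        ext ω
        simp only [Set.mem_inter_iff, Set.mem_setOf_eq]
        constructor
        · rintro ⟨⟨_, h2⟩, h3⟩; exact ⟨h3, h2⟩
        · rintro ⟨h3, h2⟩; exact ⟨⟨by omega, h2⟩, h3⟩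
      have e2 : ({ω | t < T ω} ∩ {ω | X u ω = j}) \ {ω | t+1 < T ω}
          = {ω | T ω = t+1 ∧ X u ω = j} := by
        ext ω
        simp only [Set.mem_diff, Set.mem_inter_iff, Set.mem_setOf_eq]
        constructor
        · rintro ⟨⟨h1, h2⟩, h3⟩; exact ⟨by omega, h2⟩
        · rintro ⟨h1, h2⟩; exact ⟨⟨by omega, h2⟩, by omega⟩
      have h3 := hsst (t+1) u hu j
      rw [e1, e2, hW, h3, hceq] at h
      linarith
  intro t
  have hv := (Φ t).2 t le_rfl
  have hz : (μ ({ω | t < T ω} ∩ {ω | X t ω = j})).toReal = 0 := by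
    rw [hv]; ring
  have hset : {ω | t < T ω ∧ X t ω = j} = {ω | t < T ω} ∩ {ω | X t ω = j} := rfl
  rw [hset]
  rcases (ENNReal.toReal_eq_zero_iff _).mp hz with h | h
  · exact h
  · exact absurd h (measure_ne_top μ _)
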